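/- Let e₀ > 0, f₀ > 0, and on the interval (0, 1/3) define c(π) = (1/16)(−3π² + 10π + 7/3), e(π) = e₀ (3π + 7)^{7/2} (1 − 3π)^{−1/2} (π + 1)^{−3}, and f(π) = f₀ ((3π + 7)/(1 − 3π))². Then for every π ∈ (0, 1/3): c(π) ≠ π, e'(π) = e(π)·π/((c(π) − π)(π + 1)) and f'(π) = f(π)/(c(π) − π). -/

import Mathlib

theorem stmt_19 (e₀ f₀ : ℝ) (he₀ : 0 < e₀) (hf₀ : 0 < f₀) :
    ∀ π : ℝ, 0 < π → π < 1 / 3 →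
      (1 / 16 : ℝ) * (-3 * π ^ 2 + 10 * π + 7 / 3) ≠ π ∧
      HasDerivAt
        (fun x : ℝ =>
          e₀ * (3 * x + 7) ^ ((7 : ℝ) / 2) * (1 - 3 * x) ^ (-(1 : ℝ) / 2) *
            (x + 1) ^ (-(3 : ℝ)))
        ((e₀ * (3 * π + 7) ^ ((7 : ℝ) / 2) * (1 - 3 * π) ^ (-(1 : ℝ) / 2) *
            (π + 1) ^ (-(3 : ℝ))) * π /
          (((1 / 16) * (-3 * π ^ 2 + 10 * π + 7 / 3) - π) * (π + 1))) π ∧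
      HasDerivAt (fun x : ℝ => f₀ * ((3 * x + 7) / (1 - 3 * x)) ^ 2)
        ((f₀ * ((3 * π + 7) / (1 - 3 * π)) ^ 2) /
          ((1 / 16) * (-3 * π ^ 2 + 10 * π + 7 / 3) - π)) π := by
  intro π hπ hπ'
  have ha : (0:ℝ) < 3 * π + 7 := by linarith
  have hb : (0:ℝ) < 1 - 3 * π := by linarith
  have hd : (0:ℝ) < π + 1 := by linarith
  have hcπ : (1 / 16 : ℝ) * (-3 * π ^ 2 + 10 * π + 7 / 3) - π
      = (1 - 3 * π) * (3 * π + 7) / 48 := by ring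
  have hne : (1 / 16 : ℝ) * (-3 * π ^ 2 + 10 * π + 7 / 3) ≠ π := by
    intro h
    have : (1 / 16 : ℝ) * (-3 * π ^ 2 + 10 * π + 7 / 3) - π = 0 := by rw [h]; ring
    rw [hcπ] at this
    have := mul_pos hb ha
    nlinarith
  refine ⟨hne, ?_, ?_⟩
  · -- e derivative
    have h1 : HasDerivAt (fun x : ℝ => 3 * x + 7) 3 π := by
      simpa using ((hasDerivAt_id π).const_mul 3).add_const 7
    have h2 : HasDerivAt (fun x : ℝ => 1 - 3 * x) (-3) π := by
      simpa using ((hasDerivAt_id π).const_mul 3).const_sub 1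
    have h3 : HasDerivAt (fun x : ℝ => x + 1) 1 π := (hasDerivAt_id π).add_const 1
    have hA : HasDerivAt (fun x : ℝ => (3 * x + 7) ^ ((7:ℝ)/2))
        (3 * ((7:ℝ)/2) * (3 * π + 7) ^ ((7:ℝ)/2 - 1)) π :=
      h1.rpow_const (Or.inl ha.ne')
    have hB : HasDerivAt (fun x : ℝ => (1 - 3 * x) ^ (-(1:ℝ)/2))
        (-3 * (-(1:ℝ)/2) * (1 - 3 * π) ^ (-(1:ℝ)/2 - 1)) π :=
      h2.rpow_const (Or.inl hb.ne')
    have hC : HasDerivAt (fun x : ℝ => (x + 1) ^ (-(3:ℝ)))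
        (1 * (-(3:ℝ)) * (π + 1) ^ (-(3:ℝ) - 1)) π :=
      h3.rpow_const (Or.inl hd.ne')
    have hfull := ((hA.const_mul e₀).fun_mul hB).fun_mul hC
    refine hfull.congr_deriv ?_
    rw [hcπ]
    rw [show ((7:ℝ)/2 - 1) = (7:ℝ)/2 - 1 from rfl]
    rw [Real.rpow_sub_one ha.ne', Real.rpow_sub_one hb.ne',
      Real.rpow_sub_one hd.ne']
    have hArp : (0:ℝ) < (3 * π + 7) ^ ((7:ℝ)/2) := Real.rpow_pos_of_pos ha _
    have hBrp : (0:ℝ) < (1 - 3 * π) ^ (-(1:ℝ)/2) := Real.rpow_pos_of_pos hb _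
    have hCrp : (0:ℝ) < (π + 1) ^ (-(3:ℝ)) := Real.rpow_pos_of_pos hd _
    field_simp
    ring
  · -- f derivative
    have h1 : HasDerivAt (fun x : ℝ => 3 * x + 7) 3 π := by
      simpa using ((hasDerivAt_id π).const_mul 3).add_const 7
    have h2 : HasDerivAt (fun x : ℝ => 1 - 3 * x) (-3) π := by
      simpa using ((hasDerivAt_id π).const_mul 3).const_sub 1
    have hq : HasDerivAt (fun x : ℝ => (3 * x + 7) / (1 - 3 * x))
        ((3 * (1 - 3 * π) - (3 * π + 7) * (-3)) / (1 - 3 * π) ^ 2) π :=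
      h1.div h2 hb.ne'
    have hp : HasDerivAt (fun x : ℝ => ((3 * x + 7) / (1 - 3 * x)) ^ 2)
        (2 * ((3 * π + 7) / (1 - 3 * π)) ^ 1 *
          ((3 * (1 - 3 * π) - (3 * π + 7) * (-3)) / (1 - 3 * π) ^ 2)) π := by
      simpa using hq.fun_pow 2
    have hfull := hp.const_mul f₀
    refine hfull.congr_deriv ?_
    rw [hcπ]
    field_simp
    ring
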